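/- For any 2-uniform graph G on n vertices (the ℓ = 1, k = 2 case of Bey's inequality), the sum of the squares of the vertex degrees satisfies Σ_v d(v)² ≤ (2/(n-1))·|E(G)|² + (n-2)·|E(G)|. -/

import Mathlib

open Finset

/-- The graph obtained by deleting a vertex. -/
def deCaenDel {V : Type} (G : SimpleGraph V) (v : V) : SimpleGraph {u : V // u ≠ v} :=
  G.comap Subtype.val

instance deCaenDelDec {V : Type} (G : SimpleGraph V) [h : DecidableRel G.Adj] (v : V) :
    DecidableRel (deCaenDel G v).Adj := fun a b => h a.1 b.1

/-- Degree in the vertex-deleted graph. -/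
lemma deCaenDel_degree {V : Type} [Fintype V] [DecidableEq V] (G : SimpleGraph V)
    [DecidableRel G.Adj] (v : V) (u : {u : V // u ≠ v}) :
    G.degree u.1 = (deCaenDel G v).degree u + (if G.Adj u.1 v then 1 else 0) := by
  classical
  have h1 : (deCaenDel G v).neighborFinset u = (G.neighborFinset u.1).subtype (· ≠ v) := by
    ext w
    rw [SimpleGraph.mem_neighborFinset, Finset.mem_subtype, SimpleGraph.mem_neighborFinset]
    simp [deCaenDel, SimpleGraph.mem_neighborFinset, Finset.mem_subtype, SimpleGraph.comap_adj]
  have h2 : (deCaenDel G v).degree u = ((G.neighborFinset u.1).filter (· ≠ v)).card := by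
    rw [SimpleGraph.degree, h1, Finset.card_subtype]
  have h3 := Finset.card_filter_add_card_filter_not
    (s := G.neighborFinset u.1) (p := (· ≠ v))
  have h4 : ((G.neighborFinset u.1).filter (fun w => ¬ w ≠ v)).card
      = if G.Adj u.1 v then 1 else 0 := by
    simp only [Decidable.not_not]
    rw [Finset.filter_eq' (G.neighborFinset u.1) v]
    by_cases h : G.Adj u.1 v <;> simp [h, SimpleGraph.mem_neighborFinset]
  rw [SimpleGraph.degree]
  omega

/-- The key algebraic inequality for the induction step. -/
lemma deCaen_key (n d D t S' : ℚ) (hn : 3 ≤ n) (hd1 : 1 ≤ d) (hdn : d ≤ n - 1)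
    (hDn : D ≤ n * d) (ht1 : t ≤ D - d) (ht2 : t ≤ d * d) (ht3 : d ≤ t)
    (hcut : 0 ≤ (n - 1 - d) * (n - 2 - d))
    (hIH : (n - 2) * S' ≤ (D - 2 * d) ^ 2 / 2 + (n - 2) * (n - 3) * (D - 2 * d) / 2) :
    (n - 1) * (S' + d ^ 2 - d + 2 * t) ≤ D ^ 2 / 2 + (n - 1) * (n - 2) * D / 2 := by
  have hd1' : (0:ℚ) ≤ d - 1 := by linarith
  have hnd : (0:ℚ) ≤ n - 1 - d := by linarith
  have hndD : (0:ℚ) ≤ n * d - D := by linarith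
  have hD2d : (0:ℚ) ≤ D - 2 * d := by linarith
  have hn1 : (0:ℚ) ≤ n - 1 := by linarith
  have hn2 : (0:ℚ) < n - 2 := by linarith
  have hX1 : 0 ≤ (n - 1) * ((D - 2*d) ^ 2 / 2 + (n-2)*(n-3)*(D - 2*d)/2 - (n-2)*S') :=
    mul_nonneg hn1 (by linarith)
  have H : 0 ≤ (n - 2) * (D ^ 2 / 2 + (n - 1) * (n - 2) * D / 2
      - (n - 1) * (S' + d ^ 2 - d + 2 * t)) := by
    rcases le_total (D - d) (d * d) with h | h
    · have hbr : (0:ℚ) ≤ d*d + d - D := by linarith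
      have hX2 : 0 ≤ (n-1)*(n-2)*((D - d) - t) :=
        mul_nonneg (mul_nonneg hn1 hn2.le) (by linarith)
      have P1 : 0 ≤ (n-1-d)*(d*d+d-D) := mul_nonneg hnd hbr
      have P2 : 0 ≤ (n*d-D)*((n-1-d)*(n-2-d)) := mul_nonneg hndD hcut
      have P3 : 0 ≤ (d*d+d-D)*(D-2*d) := mul_nonneg hbr hD2d
      have P4 : 0 ≤ (d*d+d-D)*((n-1-d)*(n-2-d)) := mul_nonneg hbr hcut
      have P5 : 0 ≤ (D-2*d)*((n-1-d)*(n-2-d)) := mul_nonneg hD2d hcut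
      have P6 : 0 ≤ (d-1)*((n-1-d)*(d*d+d-D)) := mul_nonneg hd1' P1
      linarith [hX1, hX2, P1, P2, P3, P4, P5, P6]
    · have hbr : (0:ℚ) ≤ D - d - d*d := by linarith
      have hX2 : 0 ≤ (n-1)*(n-2)*(d*d - t) :=
        mul_nonneg (mul_nonneg hn1 hn2.le) (by linarith)
      have Q1 : 0 ≤ (n*d-D)*(D-d-d*d) := mul_nonneg hndD hbr
      have Q2 : 0 ≤ (n*d-D)*((n-1-d)*(n-2-d)) := mul_nonneg hndD hcut
      have Q3 : 0 ≤ (D-d-d*d)*(D-d-d*d) := mul_nonneg hbr hbr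
      have Q4 : 0 ≤ (D-d-d*d)*(D-2*d) := mul_nonneg hbr hD2d
      have Q5 : 0 ≤ (D-d-d*d)*((n-1-d)*(n-2-d)) := mul_nonneg hbr hcut
      have Q6 : 0 ≤ (D-2*d)*((n-1-d)*(n-2-d)) := mul_nonneg hD2d hcut
      linarith [hX1, hX2, Q1, Q2, Q3, Q4, Q5, Q6]
  by_contra hcon
  push_neg at hcon
  have hneg : (n - 2) * (D ^ 2 / 2 + (n - 1) * (n - 2) * D / 2
      - (n - 1) * (S' + d ^ 2 - d + 2 * t)) < 0 :=
    mul_neg_of_pos_of_neg hn2 (by linarith)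
  linarith

/-- de Caen's bound in degree-sum form, by induction on the number of vertices. -/
lemma deCaen_aux (N : ℕ) :
    ∀ (V : Type) [Fintype V] [DecidableEq V] (G : SimpleGraph V) [DecidableRel G.Adj],
      Fintype.card V = N →
      ((N : ℚ) - 1) * (∑ v, (G.degree v : ℚ) ^ 2) ≤
        (∑ v, (G.degree v : ℚ)) ^ 2 / 2 +
          ((N : ℚ) - 1) * ((N : ℚ) - 2) * (∑ v, (G.degree v : ℚ)) / 2 := by
  induction N with
  | zero =>
    intro V _ _ G _ hcard
    haveI : IsEmpty V := Fintype.card_eq_zero_iff.mp hcard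
    simp
  | succ N ih =>
    intro V _ _ G _ hcard
    by_cases hall : ∀ x : V, G.degree x = 0
    · simp [hall]
    · push_neg at hall
      obtain ⟨x₀, hx₀⟩ := hall
      obtain ⟨v, -, hmax⟩ := Finset.exists_max_image univ (fun x => G.degree x) ⟨x₀, mem_univ x₀⟩
      have hcard' : Fintype.card {u : V // u ≠ v} = N := by
        have h1 : Fintype.card {u : V // u ≠ v} = Fintype.card V - Fintype.card {u : V // u = v} :=
          Fintype.card_subtype_compl _
        rw [h1, Fintype.card_subtype_eq, hcard]
        omega
      have IH := ih {u : V // u ≠ v} (deCaenDel G v) hcard'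
      -- degree relation, cast to ℚ
      have hdeg : ∀ u : {u : V // u ≠ v}, ((deCaenDel G v).degree u : ℚ)
          = (G.degree u.1 : ℚ) - (if G.Adj u.1 v then (1:ℚ) else 0) := by
        intro u
        have h0 := deCaenDel_degree G v u
        have h1 : (G.degree u.1 : ℚ)
            = ((deCaenDel G v).degree u : ℚ) + (if G.Adj u.1 v then (1:ℚ) else 0) := by
          rw [h0]; push_cast [apply_ite (Nat.cast : ℕ → ℚ)]; ring
        linarith
      have hsub : ∀ f : V → ℚ, (∑ u : {u : V // u ≠ v}, f u.1) = ∑ x ∈ univ.erase v, f x := by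
        intro f
        exact (Finset.sum_subtype _ (by simp) f).symm
      set S : ℚ := ∑ x : V, (G.degree x : ℚ) ^ 2 with hS
      set D : ℚ := ∑ x : V, (G.degree x : ℚ) with hD
      set S' : ℚ := ∑ u : {u : V // u ≠ v}, ((deCaenDel G v).degree u : ℚ) ^ 2 with hS'
      set D' : ℚ := ∑ u : {u : V // u ≠ v}, ((deCaenDel G v).degree u : ℚ) with hD'
      set t : ℚ := ∑ x ∈ univ.erase v,
        (if G.Adj x v then (1:ℚ) else 0) * (G.degree x : ℚ) with ht
      have hdq0 : ∀ x : V, (0:ℚ) ≤ (G.degree x : ℚ) := fun x => by positivity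
      have haq0 : ∀ x : V, (0:ℚ) ≤ (if G.Adj x v then (1:ℚ) else 0) := fun x => by
        split <;> norm_num
      have haqle : ∀ x : V, (if G.Adj x v then (1:ℚ) else 0) ≤ 1 := fun x => by
        split <;> norm_num
      have hdqmax : ∀ x : V, (G.degree x : ℚ) ≤ (G.degree v : ℚ) := fun x => by
        exact_mod_cast hmax x (mem_univ x)
      have hadj_deg : ∀ x, G.Adj x v → (1:ℚ) ≤ (G.degree x : ℚ) := by
        intro x hx
        have h1 : 0 < G.degree x := by
          rw [SimpleGraph.degree_pos_iff_exists_adj]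
          exact ⟨v, hx⟩
        exact_mod_cast h1
      have hsum_aq : ∑ x ∈ univ.erase v, (if G.Adj x v then (1:ℚ) else 0)
          = (G.degree v : ℚ) := by
        have h0 : (if G.Adj v v then (1:ℚ) else 0) = 0 := by simp
        have h1 : ∑ x ∈ univ.erase v, (if G.Adj x v then (1:ℚ) else 0)
            = ∑ x : V, (if G.Adj x v then (1:ℚ) else 0) := by
          rw [← Finset.sum_erase_add univ _ (mem_univ v), h0, add_zero]
        rw [h1, Finset.sum_boole]
        have h3 : univ.filter (fun x => G.Adj x v) = G.neighborFinset v := by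
          ext w
          rw [Finset.mem_filter, SimpleGraph.mem_neighborFinset]
          exact ⟨fun h => h.2.symm, fun h => ⟨mem_univ w, h.symm⟩⟩
        rw [h3]
        rfl
      have hsum_dqE : ∑ x ∈ univ.erase v, (G.degree x : ℚ) = D - (G.degree v : ℚ) := by
        rw [hD, ← Finset.sum_erase_add univ _ (mem_univ v)]
        ring
      have hsum_dq2E : ∑ x ∈ univ.erase v, (G.degree x : ℚ) ^ 2
          = S - (G.degree v : ℚ) ^ 2 := by
        rw [hS, ← Finset.sum_erase_add univ (fun x => (G.degree x : ℚ) ^ 2) (mem_univ v)]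
        ring
      have hS'eq : S' = S - (G.degree v : ℚ) ^ 2 - 2 * t + (G.degree v : ℚ) := by
        rw [hS']
        have h1 : (∑ u : {u : V // u ≠ v}, ((deCaenDel G v).degree u : ℚ) ^ 2)
            = ∑ x ∈ univ.erase v,
              ((G.degree x : ℚ) - (if G.Adj x v then (1:ℚ) else 0)) ^ 2 := by
          rw [Finset.sum_congr rfl (fun u _ => by rw [hdeg u])]
          exact hsub (fun x => ((G.degree x : ℚ) - (if G.Adj x v then (1:ℚ) else 0)) ^ 2)
        rw [h1]
        have h2 : ∀ x ∈ univ.erase v,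
            ((G.degree x : ℚ) - (if G.Adj x v then (1:ℚ) else 0)) ^ 2
            = (G.degree x : ℚ) ^ 2
              - 2 * ((if G.Adj x v then (1:ℚ) else 0) * (G.degree x : ℚ))
              + (if G.Adj x v then (1:ℚ) else 0) := by
          intro x _
          by_cases h : G.Adj x v <;> simp [h] <;> try ring
        rw [Finset.sum_congr rfl h2, Finset.sum_add_distrib, Finset.sum_sub_distrib,
          ← Finset.mul_sum, hsum_dq2E, hsum_aq, ← ht]
      have hD'eq : D' = D - 2 * (G.degree v : ℚ) := by
        rw [hD']
        have h1 : (∑ u : {u : V // u ≠ v}, ((deCaenDel G v).degree u : ℚ))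
            = ∑ x ∈ univ.erase v,
              ((G.degree x : ℚ) - (if G.Adj x v then (1:ℚ) else 0)) := by
          rw [Finset.sum_congr rfl (fun u _ => by rw [hdeg u])]
          exact hsub (fun x => (G.degree x : ℚ) - (if G.Adj x v then (1:ℚ) else 0))
        rw [h1, Finset.sum_sub_distrib, hsum_dqE, hsum_aq]
        ring
      have hb1 : t ≤ D - (G.degree v : ℚ) := by
        rw [ht, ← hsum_dqE]
        refine Finset.sum_le_sum fun x _ => ?_
        nlinarith [haq0 x, haqle x, hdq0 x]
      have hb2 : t ≤ (G.degree v : ℚ) * (G.degree v : ℚ) := by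
        have h1 : t ≤ ∑ x ∈ univ.erase v,
            (if G.Adj x v then (1:ℚ) else 0) * (G.degree v : ℚ) := by
          rw [ht]
          exact Finset.sum_le_sum fun x _ => mul_le_mul_of_nonneg_left (hdqmax x) (haq0 x)
        rwa [← Finset.sum_mul, hsum_aq] at h1
      have hb3 : (G.degree v : ℚ) ≤ t := by
        rw [← hsum_aq, ht]
        refine Finset.sum_le_sum fun x _ => ?_
        by_cases h : G.Adj x v
        · have h1 := hadj_deg x h
          simp only [if_pos h]
          linarith
        · simp [h]
      have hb4 : D ≤ ((N:ℚ) + 1) * (G.degree v : ℚ) := by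
        have h1 : D ≤ ∑ _x : V, (G.degree v : ℚ) := by
          rw [hD]; exact Finset.sum_le_sum fun x _ => hdqmax x
        rw [Finset.sum_const, Finset.card_univ, hcard, nsmul_eq_mul] at h1
        push_cast at h1
        linarith
      have hb5 : (G.degree v : ℚ) ≤ (N : ℚ) := by
        have h1 := G.degree_lt_card_verts v
        rw [hcard] at h1
        exact_mod_cast Nat.lt_succ_iff.mp h1
      have hb6 : (1:ℚ) ≤ (G.degree v : ℚ) := by
        have h1 : 1 ≤ G.degree x₀ := Nat.one_le_iff_ne_zero.mpr hx₀
        have h2 := hmax x₀ (mem_univ x₀)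
        exact_mod_cast le_trans h1 h2
      have hSrepr : S = S' + (G.degree v : ℚ) ^ 2 - (G.degree v : ℚ) + 2 * t := by
        linarith
      have hcastN : ((N + 1 : ℕ) : ℚ) = (N : ℚ) + 1 := by push_cast; ring
      rw [hcastN, hSrepr]
      rcases Nat.lt_or_ge N 2 with hN | hN
      · interval_cases N
        · -- N = 0 : impossible
          exfalso
          have h0 : (G.degree v : ℚ) ≤ 0 := by exact_mod_cast hb5
          linarith
        · -- N = 1 : two vertices
          have hdeg0 : ∀ u : {u : V // u ≠ v}, (deCaenDel G v).degree u = 0 := by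
            intro u
            have h1 := (deCaenDel G v).degree_lt_card_verts u
            rw [hcard'] at h1
            omega
          have hS'0 : S' = 0 := by
            rw [hS']
            exact Finset.sum_eq_zero fun u _ => by rw [hdeg0 u]; norm_num
          push_cast
          nlinarith [hb1, hb2, hb3, hb5, hb6, hS'0, sq_nonneg (D - 2)]
      · have hn3 : (3:ℚ) ≤ (N:ℚ) + 1 := by
          have h2 : (2:ℚ) ≤ (N:ℚ) := by exact_mod_cast hN
          linarith
        have hcut : 0 ≤ ((N:ℚ) + 1 - 1 - (G.degree v : ℚ)) * ((N:ℚ) + 1 - 2 - (G.degree v : ℚ)) := by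
          have h1 := G.degree_lt_card_verts v
          rw [hcard] at h1
          rcases Nat.lt_succ_iff_lt_or_eq.mp h1 with h | h
          · have h2 : (G.degree v : ℚ) + 1 ≤ (N:ℚ) := by exact_mod_cast h
            exact mul_nonneg (by linarith) (by linarith)
          · have h2 : (G.degree v : ℚ) = (N:ℚ) := by exact_mod_cast h
            have h3 : ((N:ℚ) + 1 - 1 - (G.degree v : ℚ)) = 0 := by rw [h2]; ring
            rw [h3, zero_mul]
        have hIH' : ((N:ℚ) + 1 - 2) * S' ≤ (D - 2 * (G.degree v : ℚ)) ^ 2 / 2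
            + ((N:ℚ) + 1 - 2) * ((N:ℚ) + 1 - 3) * (D - 2 * (G.degree v : ℚ)) / 2 := by
          rw [hD'eq] at IH
          linarith [IH]
        exact deCaen_key ((N:ℚ)+1) (G.degree v : ℚ) D t S' hn3 hb6 (by linarith)
          (by linarith [hb4]) hb1 hb2 hb3 hcut hIH'

/-- De Caen's inequality: for a simple graph `G` on `n` vertices,
`∑_v d(v)² ≤ (2/(n-1))·|E(G)|² + (n-2)·|E(G)|`. -/
theorem deCaen_inequality (n : ℕ) (G : SimpleGraph (Fin n)) [DecidableRel G.Adj] :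
    ∑ v : Fin n, (G.degree v : ℚ) ^ 2 ≤
      2 / ((n : ℚ) - 1) * (G.edgeFinset.card : ℚ) ^ 2
        + ((n : ℚ) - 2) * (G.edgeFinset.card : ℚ) := by
  classical
  have haux := deCaen_aux n (Fin n) G (Fintype.card_fin n)
  have hsum : (∑ v : Fin n, (G.degree v : ℚ)) = 2 * (G.edgeFinset.card : ℚ) := by
    have h := G.sum_degrees_eq_twice_card_edges
    exact_mod_cast congrArg (Nat.cast : ℕ → ℚ) h
  rw [hsum] at haux
  rcases Nat.lt_or_ge n 2 with hn | hn
  · -- n = 0 or 1 : no edges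
    have hm : G.edgeFinset.card = 0 := by
      have h := G.sum_degrees_eq_twice_card_edges
      have hz : ∑ v : Fin n, G.degree v = 0 := by
        refine Finset.sum_eq_zero fun v _ => ?_
        have h1 := G.degree_lt_card_verts v
        rw [Fintype.card_fin] at h1
        omega
      omega
    have hz2 : ∑ v : Fin n, (G.degree v : ℚ) ^ 2 = 0 := by
      refine Finset.sum_eq_zero fun v _ => ?_
      have h1 := G.degree_lt_card_verts v
      rw [Fintype.card_fin] at h1
      have h2 : G.degree v = 0 := by omega
      rw [h2]; norm_num
    rw [hz2, hm]
    norm_num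
  · have h1 : (0:ℚ) < (n:ℚ) - 1 := by
      have : (2:ℚ) ≤ (n:ℚ) := by exact_mod_cast hn
      linarith
    have h2 : 2 / ((n : ℚ) - 1) * (G.edgeFinset.card : ℚ) ^ 2
        + ((n : ℚ) - 2) * (G.edgeFinset.card : ℚ)
        = ((2 * (G.edgeFinset.card : ℚ)) ^ 2 / 2
          + ((n:ℚ) - 1) * ((n:ℚ) - 2) * (2 * (G.edgeFinset.card : ℚ)) / 2) / ((n:ℚ) - 1) := by
      field_simp
    rw [h2, le_div_iff₀ h1]
    nlinarith [haux]
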